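/- Let ε ≥ 0, α_0 > 0, α_1 > 0, and assume hypotheses (H). There exists a constant C > 0, depending only on P^max, N^max, α_0, α_1, V, ΔΨ_0^pzc, ΔΨ_1^pzc, λ, the interface coefficients (m_u^i, k_u^i, a_u^i, b_u^i)_{i=0,1; u=P,N} and T (and independent of the mesh and of Δt), such that for every mesh, every time step and every solution of the scheme (S) satisfying 0 ≤ P_i^k ≤ P^max and 0 ≤ N_i^k ≤ N^max for all i, k, one has, for u = P and u = N, Σ_{k=0}^{K−1} Δt ‖u_h^{k+1}‖_{1,T}² ≤ C, where u_h^{k+1} is the piecewise constant function associated with (u_i^{k+1})_{0 ≤ i ≤ I+1} and ‖w_h‖_{1,T}² = Σ_{i=0}^{I} (w_{i+1} − w_i)²/h_{i+1/2} + w_0² + w_{I+1}². -/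

import Mathlib

open MeasureTheory Real Filter Topology

noncomputable section

namespace Corrosion

/-- The Bernoulli function `B(x) = x / (e^x - 1)`, `B(0) = 1`. -/
def Bern (x : ℝ) : ℝ := if x = 0 then 1 else x / (Real.exp x - 1)

/-- The two species: cations `P` and electrons `N`. -/
inductive Sp | P | N

/-- charge numbers: `z_P = 3`, `z_N = -1`. -/
def z : Sp → ℝ
  | Sp.P => 3
  | Sp.N => -1

/-- A mesh of `[0,1]`: edge points `xe 0 = x_{1/2} = 0 < xe 1 = x_{3/2} < … < xe I = x_{I+1/2} = 1`. -/
structure Mesh where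
  I : ℕ
  hI : 1 ≤ I
  xe : ℕ → ℝ
  xe0 : xe 0 = 0
  xeI : xe I = 1
  mono : ∀ j, j < I → xe j < xe (j + 1)

namespace Mesh

variable (m : Mesh)

/-- cell centers `x_i` for `1 ≤ i ≤ I` , with `x_0 = 0` and `x_{I+1} = 1`. -/
def xc (i : ℕ) : ℝ :=
  if i = 0 then 0 else if i = m.I + 1 then 1 else (m.xe (i - 1) + m.xe i) / 2

/-- `h_i = x_{i+1/2} - x_{i-1/2}` for `1 ≤ i ≤ I`. -/
def h (i : ℕ) : ℝ := m.xe i - m.xe (i - 1)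

/-- `h_{i+1/2} = x_{i+1} - x_i` for `0 ≤ i ≤ I`. -/
def hp (i : ℕ) : ℝ := m.xc (i + 1) - m.xc i

/-- mesh size `h = max_{1 ≤ i ≤ I} h_i`. -/
def size : ℝ := (Finset.Icc 1 m.I).sup' ⟨1, Finset.mem_Icc.mpr ⟨le_refl 1, m.hI⟩⟩ m.h

/-- piecewise constant function associated to a vector `(w_i)_{0 ≤ i ≤ I+1}`:
equal to `w i` on `(x_{i-1/2}, x_{i+1/2})`, to `w 0` at `x = 0`, to `w (I+1)` at `x = 1`. -/
def pw (w : ℕ → ℝ) (x : ℝ) : ℝ :=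
  if x = 0 then w 0 else if x = 1 then w (m.I + 1) else w (sInf {i : ℕ | x < m.xe i})

/-- square of the discrete `H¹` norm `‖w_h‖_{1,T}`. -/
def norm1sq (w : ℕ → ℝ) : ℝ :=
  (∑ i ∈ Finset.range (m.I + 1), (w (i + 1) - w i) ^ 2 / m.hp i) + w 0 ^ 2 + w (m.I + 1) ^ 2

/-- square of the discrete `L²` norm `‖w_h‖_0`. -/
def norm0sq (w : ℕ → ℝ) : ℝ := ∑ i ∈ Finset.Icc 1 m.I, m.h i * w i ^ 2

/-- the discrete dual norm `‖w_h‖_{-1,2,T}`. -/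
def normDual (w : ℕ → ℝ) : ℝ :=
  sSup {r : ℝ | ∃ v : ℕ → ℝ, m.norm1sq v ≤ 1 ∧
    r = ∫ x in Set.Ioo (0:ℝ) 1, m.pw w x * m.pw v x}

/-- piecewise constant space derivative: on `(x_i, x_{i+1})` it equals `(w_{i+1} - w_i)/h_{i+1/2}`. -/
def dpw (w : ℕ → ℝ) (x : ℝ) : ℝ :=
  (w (sInf {i : ℕ | x < m.xc (i + 1)} + 1) - w (sInf {i : ℕ | x < m.xc (i + 1)})) /
    m.hp (sInf {i : ℕ | x < m.xc (i + 1)})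

end Mesh

/-- All the data of the corrosion model. -/
structure Data where
  lam : ℝ
  eps : ℝ
  alpha0 : ℝ
  alpha1 : ℝ
  V : ℝ
  rho : ℝ
  dPsi0 : ℝ
  dPsi1 : ℝ
  umax : Sp → ℝ
  m0 : Sp → ℝ
  k0 : Sp → ℝ
  m1 : Sp → ℝ
  k1 : Sp → ℝ
  a0 : Sp → ℝ
  b0 : Sp → ℝ
  a1 : Sp → ℝ
  b1 : Sp → ℝ
  u0 : Sp → ℝ → ℝ
  lam_pos : 0 < lam
  umax_pos : ∀ u, 0 < umax u
  m0_pos : ∀ u, 0 < m0 u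
  k0_pos : ∀ u, 0 < k0 u
  m1_pos : ∀ u, 0 < m1 u
  k1_pos : ∀ u, 0 < k1 u
  a0_mem : ∀ u, a0 u ∈ Set.Icc (0:ℝ) 1
  b0_mem : ∀ u, b0 u ∈ Set.Icc (0:ℝ) 1
  a1_mem : ∀ u, a1 u ∈ Set.Icc (0:ℝ) 1
  b1_mem : ∀ u, b1 u ∈ Set.Icc (0:ℝ) 1
  u0_meas : ∀ u, Measurable (u0 u)

namespace Data
variable (d : Data)

/-- `ε_P = 1`, `ε_N = ε`. -/
def epsu : Sp → ℝ
  | Sp.P => 1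
  | Sp.N => d.eps

def beta0 (u : Sp) (x : ℝ) : ℝ :=
  d.m0 u * Real.exp (-(z u) * d.b0 u * x) + d.k0 u * Real.exp (z u * d.a0 u * x)

def beta1 (u : Sp) (x : ℝ) : ℝ :=
  d.m1 u * Real.exp (-(z u) * d.b1 u * x) + d.k1 u * Real.exp (z u * d.a1 u * x)

def gamma0 (u : Sp) (x : ℝ) : ℝ := d.m0 u * d.umax u * Real.exp (-(z u) * d.b0 u * x)

def gamma1 (u : Sp) (x : ℝ) : ℝ := d.k1 u * d.umax u * Real.exp (z u * d.a1 u * x)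

/-- Hypotheses (H). -/
def HypH : Prop :=
  (3 * d.umax Sp.P - d.umax Sp.N + d.rho = 0) ∧
  (∀ u, ∀ᵐ x ∂(volume.restrict (Set.Ioo (0:ℝ) 1)), 0 ≤ d.u0 u x ∧ d.u0 u x ≤ d.umax u) ∧
  (-(1 / (3 * d.a0 Sp.P)) * (1 + Real.log (d.alpha0 * d.a0 Sp.P * d.k0 Sp.P)) ≤ d.dPsi0 ∧
    d.dPsi0 ≤ (1 / d.a0 Sp.N) * (1 + Real.log (d.alpha0 * d.a0 Sp.N * d.k0 Sp.N))) ∧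
  (-(1 / d.b1 Sp.N) * (1 + Real.log (d.alpha1 * d.b1 Sp.N * d.m1 Sp.N)) ≤ d.dPsi1 ∧
    d.dPsi1 ≤ (1 / (3 * d.b1 Sp.P)) * (1 + Real.log (d.alpha1 * d.b1 Sp.P * d.m1 Sp.P)))

end Data

/-- `dΨ_{i+1/2} = (Ψ_{i+1} - Ψ_i)/h_{i+1/2}`. -/
def dPsiF (m : Mesh) (Psi : ℕ → ℝ) (i : ℕ) : ℝ := (Psi (i + 1) - Psi i) / m.hp i

/-- the Scharfetter-Gummel numerical flux `F_{u,i+1/2}`. -/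
def Flux (m : Mesh) (d : Data) (u : Sp) (Psi w : ℕ → ℝ) (i : ℕ) : ℝ :=
  (Bern (z u * m.hp i * dPsiF m Psi i) * w i -
    Bern (-(z u) * m.hp i * dPsiF m Psi i) * w (i + 1)) / m.hp i

/-- The fully implicit scheme (S), with time step `Δt = T / K`.
`sol u k i` is `u_i^k` (for `u = P, N`) and `Psi k i` is `Ψ_i^k`. -/
def Scheme (m : Mesh) (d : Data) (T : ℝ) (K : ℕ)
    (sol : Sp → ℕ → ℕ → ℝ) (Psi : ℕ → ℕ → ℝ) : Prop :=
  (∀ u i, 1 ≤ i → i ≤ m.I →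
    sol u 0 i = (1 / m.h i) * ∫ x in Set.Ioo (m.xe (i - 1)) (m.xe i), d.u0 u x) ∧
  (∀ k, k < K → ∀ i, 1 ≤ i → i ≤ m.I →
    -(d.lam ^ 2) * (dPsiF m (Psi (k + 1)) i - dPsiF m (Psi (k + 1)) (i - 1)) =
      m.h i * (3 * sol Sp.P (k + 1) i - sol Sp.N (k + 1) i + d.rho)) ∧
  (∀ u k, k < K → ∀ i, 1 ≤ i → i ≤ m.I →
    d.epsu u * m.h i * (sol u (k + 1) i - sol u k i) / (T / K) +
      Flux m d u (Psi (k + 1)) (sol u (k + 1)) i -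
      Flux m d u (Psi (k + 1)) (sol u (k + 1)) (i - 1) = 0) ∧
  (∀ k, k < K → Psi (k + 1) 0 - d.alpha0 * dPsiF m (Psi (k + 1)) 0 = d.dPsi0) ∧
  (∀ k, k < K →
    Psi (k + 1) (m.I + 1) + d.alpha1 * dPsiF m (Psi (k + 1)) m.I = d.V - d.dPsi1) ∧
  (∀ u k, k < K →
    -(Flux m d u (Psi (k + 1)) (sol u (k + 1)) 0) =
      d.beta0 u (Psi (k + 1) 0) * sol u (k + 1) 0 - d.gamma0 u (Psi (k + 1) 0)) ∧
  (∀ u k, k < K →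
    Flux m d u (Psi (k + 1)) (sol u (k + 1)) m.I =
      d.beta1 u (d.V - Psi (k + 1) (m.I + 1)) * sol u (k + 1) (m.I + 1) -
      d.gamma1 u (d.V - Psi (k + 1) (m.I + 1)))

/-- The stability property `0 ≤ u_i^k ≤ u^max` for all `i, k`. -/
def Stable (m : Mesh) (d : Data) (K : ℕ) (sol : Sp → ℕ → ℕ → ℝ) : Prop :=
  ∀ u k, k ≤ K → ∀ i, i ≤ m.I + 1 → 0 ≤ sol u k i ∧ sol u k i ≤ d.umax u

/-- the approximate space-time solution `w_{h,Δt}`, equal to the piecewise constant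
function built on `w^{k+1}` for `t ∈ [t^k, t^{k+1})`, with `Δt = T/K`. -/
def apx (m : Mesh) (T : ℝ) (K : ℕ) (w : ℕ → ℕ → ℝ) (x t : ℝ) : ℝ :=
  m.pw (w (Nat.floor (t / (T / K)) + 1)) x

/-- the discrete space derivative `∂_{x,T} w_{h,Δt}`. -/
def dapx (m : Mesh) (T : ℝ) (K : ℕ) (w : ℕ → ℕ → ℝ) (x t : ℝ) : ℝ :=
  m.dpw (w (Nat.floor (t / (T / K)) + 1)) x


/-- hyperbolic cotangent `coth y = cosh y / sinh y`. -/
def coth (x : ℝ) : ℝ := Real.cosh x / Real.sinh x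

/-- approximate trace at `x = 0`: `t ∈ [t^k, t^{k+1}) ↦ w_0^{k+1}`. -/
def trace0 (T : ℝ) (K : ℕ) (w : ℕ → ℕ → ℝ) (t : ℝ) : ℝ :=
  w (Nat.floor (t / (T / K)) + 1) 0

/-- approximate trace at `x = 1`: `t ∈ [t^k, t^{k+1}) ↦ w_{I+1}^{k+1}`. -/
def trace1 (m : Mesh) (T : ℝ) (K : ℕ) (w : ℕ → ℕ → ℝ) (t : ℝ) : ℝ :=
  w (Nat.floor (t / (T / K)) + 1) (m.I + 1)

/-- the measure on `(0,1) × (0,T)` (space × time). -/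
def stMeasure (T : ℝ) : MeasureTheory.Measure (ℝ × ℝ) :=
  (MeasureTheory.volume.restrict (Set.Ioo (0:ℝ) 1)).prod
    (MeasureTheory.volume.restrict (Set.Ioo (0:ℝ) T))

end Corrosion
namespace Corrosion

lemma exp_sub_one_ne {y : ℝ} (hy : y ≠ 0) : Real.exp y - 1 ≠ 0 := by
  intro h
  exact hy (Real.exp_injective (by rw [Real.exp_zero]; linarith))

lemma Bern_neg (y : ℝ) : Bern (-y) = Bern y + y := by
  unfold Bern
  rcases eq_or_ne y 0 with rfl | hy
  · simp
  · rw [if_neg (neg_ne_zero.mpr hy), if_neg hy, Real.exp_neg]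
    have h1 := exp_sub_one_ne hy
    have h2 : Real.exp y ≠ 0 := (Real.exp_pos y).ne'
    have h4 : 1 - Real.exp y ≠ 0 := fun h => h1 (by linarith)
    field_simp
    ring

lemma Bern_ge_exp (y : ℝ) : Real.exp (-|y|) ≤ Bern y := by
  unfold Bern
  rcases lt_trichotomy y 0 with hy | rfl | hy
  · rw [if_neg hy.ne, abs_of_neg hy, neg_neg]
    have hden : Real.exp y - 1 < 0 := by
      have : Real.exp y < Real.exp 0 := Real.exp_lt_exp.mpr hy
      rw [Real.exp_zero] at this; linarith
    have h1 : (1:ℝ) ≤ y / (Real.exp y - 1) := by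
      rw [le_div_iff_of_neg hden]
      have := Real.add_one_le_exp y
      linarith
    have h2 : Real.exp y ≤ 1 := by
      have : Real.exp y ≤ Real.exp 0 := Real.exp_le_exp.mpr hy.le
      rwa [Real.exp_zero] at this
    linarith
  · simp
  · rw [if_neg hy.ne', abs_of_pos hy]
    have hden : 0 < Real.exp y - 1 := by
      have := Real.add_one_le_exp y; linarith
    rw [le_div_iff₀ hden, Real.exp_neg]
    have h2 := Real.add_one_le_exp (-y)
    rw [Real.exp_neg] at h2
    have h3 : (Real.exp y)⁻¹ * Real.exp y = 1 := inv_mul_cancel₀ (Real.exp_pos y).ne'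
    nlinarith [h2, h3]

end Corrosion
namespace Corrosion
namespace Mesh

variable (m : Mesh)

lemma xe_lt_of_lt : ∀ {j j' : ℕ}, j < j' → j' ≤ m.I → m.xe j < m.xe j' := by
  intro j j'
  induction j' with
  | zero => omega
  | succ n ih =>
    intro hjj hj'
    rcases Nat.lt_succ_iff_lt_or_eq.mp hjj with h | rfl
    · exact (ih h (by omega)).trans (m.mono n (by omega))
    · exact m.mono j (by omega)

lemma xc_zero : m.xc 0 = 0 := if_pos rfl

lemma xc_last : m.xc (m.I + 1) = 1 := by
  unfold xc; rw [if_neg (by omega), if_pos rfl]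

lemma xc_mid {i : ℕ} (h1 : 1 ≤ i) (h2 : i ≤ m.I) :
    m.xc i = (m.xe (i - 1) + m.xe i) / 2 := by
  unfold xc; rw [if_neg (by omega), if_neg (by omega)]

lemma hp_pos {i : ℕ} (hi : i ≤ m.I) : 0 < m.hp i := by
  unfold hp
  rcases Nat.eq_zero_or_pos i with rfl | h1
  · rw [xc_zero, m.xc_mid (le_refl 1) m.hI]
    have h2 : m.xe 0 < m.xe 1 := m.mono 0 m.hI
    rw [m.xe0] at h2 ⊢
    norm_num; linarith
  · rcases eq_or_lt_of_le hi with rfl | hlt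
    · rw [xc_last, m.xc_mid h1 le_rfl]
      have h2 : m.xe (m.I - 1) < m.xe m.I := m.xe_lt_of_lt (by omega) le_rfl
      rw [m.xeI] at h2 ⊢
      linarith
    · rw [m.xc_mid (by omega) (by omega : i + 1 ≤ m.I), m.xc_mid h1 hi]
      have e : i + 1 - 1 = i := rfl
      rw [e]
      have h2 : m.xe (i - 1) < m.xe (i + 1) := m.xe_lt_of_lt (by omega) (by omega)
      linarith

lemma sum_hp : ∑ i ∈ Finset.range (m.I + 1), m.hp i = 1 := by
  have := Finset.sum_range_sub m.xc (m.I + 1)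
  simpa [hp, xc_zero, xc_last] using this

lemma hp_le_one {i : ℕ} (hi : i ≤ m.I) : m.hp i ≤ 1 := by
  rw [← m.sum_hp]
  exact Finset.single_le_sum (f := m.hp)
    (fun j hj => (m.hp_pos (by simpa using Nat.lt_succ_iff.mp (Finset.mem_range.mp hj))).le)
    (Finset.mem_range.mpr (by omega))

lemma h_pos {i : ℕ} (h1 : 1 ≤ i) (h2 : i ≤ m.I) : 0 < m.h i := by
  unfold h
  have := m.xe_lt_of_lt (show i - 1 < i by omega) h2
  linarith

lemma sum_h' : ∑ j ∈ Finset.range m.I, m.h (j + 1) = 1 := by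
  have := Finset.sum_range_sub m.xe m.I
  simpa [h, m.xe0, m.xeI, Nat.succ_sub_one] using this

lemma sum_h_le {n : ℕ} (hn : n ≤ m.I) : ∑ j ∈ Finset.range n, m.h (j + 1) ≤ 1 := by
  rw [← m.sum_h']
  refine Finset.sum_le_sum_of_subset_of_nonneg (Finset.range_subset_range.mpr hn) ?_
  intro j hj _
  exact (m.h_pos (by omega) (by simpa using Finset.mem_range.mp hj)).le

end Mesh
end Corrosion
namespace Corrosion

/-- Uniform bound on the discrete potential gradient and boundary values. -/
lemma psi_bound (lam alpha0 alpha1 V dPsi0 dPsi1 R : ℝ)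
    (ha0 : 0 < alpha0) (ha1 : 0 < alpha1) (hR : 0 ≤ R / lam ^ 2)
    (m : Mesh) (Pk : ℕ → ℝ)
    (hpois : ∀ i, 1 ≤ i → i ≤ m.I →
      |dPsiF m Pk i - dPsiF m Pk (i - 1)| ≤ m.h i * (R / lam ^ 2))
    (hbc0 : Pk 0 - alpha0 * dPsiF m Pk 0 = dPsi0)
    (hbc1 : Pk (m.I + 1) + alpha1 * dPsiF m Pk m.I = V - dPsi1) :
    (∀ i, i ≤ m.I → |dPsiF m Pk i| ≤
      (|V| + |dPsi0| + |dPsi1| + R / lam ^ 2 + alpha1 * (R / lam ^ 2)) /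
        (1 + alpha0 + alpha1) + R / lam ^ 2) ∧
    |Pk 0| ≤ |dPsi0| + alpha0 *
      ((|V| + |dPsi0| + |dPsi1| + R / lam ^ 2 + alpha1 * (R / lam ^ 2)) /
        (1 + alpha0 + alpha1)) ∧
    |Pk (m.I + 1)| ≤ |V| + |dPsi1| + alpha1 *
      ((|V| + |dPsi0| + |dPsi1| + R / lam ^ 2 + alpha1 * (R / lam ^ 2)) /
        (1 + alpha0 + alpha1) + R / lam ^ 2) := by
  set ψ : ℕ → ℝ := fun i => dPsiF m Pk i with hψ
  set A : ℝ := R / lam ^ 2 with hA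
  set D0 : ℝ := (|V| + |dPsi0| + |dPsi1| + A + alpha1 * A) / (1 + alpha0 + alpha1) with hD0
  -- step bound
  have hstep : ∀ i, i ≤ m.I → |ψ i - ψ 0| ≤ A := by
    intro i hi
    have tele : ψ i - ψ 0 = ∑ j ∈ Finset.range i, (ψ (j + 1) - ψ j) :=
      (Finset.sum_range_sub ψ i).symm
    rw [tele]
    calc |∑ j ∈ Finset.range i, (ψ (j + 1) - ψ j)|
        ≤ ∑ j ∈ Finset.range i, |ψ (j + 1) - ψ j| :=
          Finset.abs_sum_le_sum_abs _ _
      _ ≤ ∑ j ∈ Finset.range i, m.h (j + 1) * A := by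
          refine Finset.sum_le_sum fun j hj => ?_
          have hj' : j < i := Finset.mem_range.mp hj
          have := hpois (j + 1) (by omega) (by omega)
          simpa [Nat.succ_sub_one] using this
      _ = (∑ j ∈ Finset.range i, m.h (j + 1)) * A := by
          rw [Finset.sum_mul]
      _ ≤ 1 * A := by
          refine mul_le_mul_of_nonneg_right (m.sum_h_le hi) hR
      _ = A := one_mul A
  -- telescoping of Pk
  have htel2 : Pk (m.I + 1) - Pk 0 = ∑ i ∈ Finset.range (m.I + 1), m.hp i * ψ i := by
    have : ∀ i ∈ Finset.range (m.I + 1), m.hp i * ψ i = Pk (i + 1) - Pk i := by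
      intro i hi
      have hppos := m.hp_pos (Nat.lt_succ_iff.mp (Finset.mem_range.mp hi))
      simp only [hψ, dPsiF]
      field_simp
    rw [Finset.sum_congr rfl this, Finset.sum_range_sub]
  have hsplit : ∑ i ∈ Finset.range (m.I + 1), m.hp i * ψ i
      = (∑ i ∈ Finset.range (m.I + 1), m.hp i * (ψ i - ψ 0)) + ψ 0 := by
    have : ∀ i ∈ Finset.range (m.I + 1),
        m.hp i * ψ i = m.hp i * (ψ i - ψ 0) + m.hp i * ψ 0 := by
      intro i _; ring
    rw [Finset.sum_congr rfl this, Finset.sum_add_distrib, ← Finset.sum_mul, m.sum_hp, one_mul]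
  set e : ℝ := ∑ i ∈ Finset.range (m.I + 1), m.hp i * (ψ i - ψ 0) with he
  have heb : |e| ≤ A := by
    calc |e| ≤ ∑ i ∈ Finset.range (m.I + 1), |m.hp i * (ψ i - ψ 0)| :=
          Finset.abs_sum_le_sum_abs _ _
      _ ≤ ∑ i ∈ Finset.range (m.I + 1), m.hp i * A := by
          refine Finset.sum_le_sum fun i hi => ?_
          have hi' := Nat.lt_succ_iff.mp (Finset.mem_range.mp hi)
          rw [abs_mul, abs_of_pos (m.hp_pos hi')]
          exact mul_le_mul_of_nonneg_left (hstep i hi') (m.hp_pos hi').le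
      _ = 1 * A := by rw [← Finset.sum_mul, m.sum_hp]
      _ = A := one_mul A
  have hfb : |ψ m.I - ψ 0| ≤ A := hstep m.I le_rfl
  -- main equation for ψ 0
  have hkey : (1 + alpha0 + alpha1) * ψ 0 =
      V - dPsi1 - dPsi0 - e - alpha1 * (ψ m.I - ψ 0) := by
    have h1 : Pk (m.I + 1) - Pk 0 = e + ψ 0 := by rw [htel2, hsplit]
    have h2 : Pk 0 = dPsi0 + alpha0 * ψ 0 := by linarith [hbc0]
    have h3 : Pk (m.I + 1) = V - dPsi1 - alpha1 * ψ m.I := by linarith [hbc1]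
    have h4 : alpha1 * ψ m.I = alpha1 * (ψ m.I - ψ 0) + alpha1 * ψ 0 := by ring
    nlinarith [h1, h2, h3]
  have hS : (0:ℝ) < 1 + alpha0 + alpha1 := by linarith
  have hD0nn : 0 ≤ D0 := by
    apply div_nonneg _ hS.le
    have := abs_nonneg V; have := abs_nonneg dPsi0; have := abs_nonneg dPsi1
    nlinarith [hR, ha1.le]
  have hpsi0 : |ψ 0| ≤ D0 := by
    rw [abs_le]
    have hVa := le_abs_self V; have hVb := neg_abs_le V
    have h0a := le_abs_self dPsi0; have h0b := neg_abs_le dPsi0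
    have h1a := le_abs_self dPsi1; have h1b := neg_abs_le dPsi1
    have hea := abs_le.mp heb; have hfa := abs_le.mp hfb
    have hf1 : alpha1 * (ψ m.I - ψ 0) ≤ alpha1 * A :=
      mul_le_mul_of_nonneg_left hfa.2 ha1.le
    have hf2 : -(alpha1 * A) ≤ alpha1 * (ψ m.I - ψ 0) := by
      have := mul_le_mul_of_nonneg_left hfa.1 ha1.le
      linarith
    constructor
    · rw [← neg_div, div_le_iff₀ hS]
      nlinarith [hkey]
    · rw [le_div_iff₀ hS]
      nlinarith [hkey]
  have hpsiI : ∀ i, i ≤ m.I → |ψ i| ≤ D0 + A := by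
    intro i hi
    calc |ψ i| = |ψ 0 + (ψ i - ψ 0)| := by ring_nf
      _ ≤ |ψ 0| + |ψ i - ψ 0| := abs_add_le _ _
      _ ≤ D0 + A := add_le_add hpsi0 (hstep i hi)
  refine ⟨hpsiI, ?_, ?_⟩
  · have h2 : Pk 0 = dPsi0 + alpha0 * ψ 0 := by linarith [hbc0]
    rw [h2]
    calc |dPsi0 + alpha0 * ψ 0| ≤ |dPsi0| + |alpha0 * ψ 0| := abs_add_le _ _
      _ ≤ |dPsi0| + alpha0 * D0 := by
          rw [abs_mul, abs_of_pos ha0]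
          exact add_le_add_right (mul_le_mul_of_nonneg_left hpsi0 ha0.le) _
  · have h3 : Pk (m.I + 1) = V - dPsi1 - alpha1 * ψ m.I := by linarith [hbc1]
    rw [h3]
    calc |V - dPsi1 - alpha1 * ψ m.I| ≤ |V| + |dPsi1| + |alpha1 * ψ m.I| := by
          have t1 : |V - dPsi1 - alpha1 * ψ m.I| ≤ |V - dPsi1| + |alpha1 * ψ m.I| :=
            abs_sub _ _
          have t2 : |V - dPsi1| ≤ |V| + |dPsi1| := abs_sub _ _
          linarith
      _ ≤ |V| + |dPsi1| + alpha1 * (D0 + A) := by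
          rw [abs_mul, abs_of_pos ha1]
          exact add_le_add_right (mul_le_mul_of_nonneg_left (hpsiI m.I le_rfl) ha1.le) _

end Corrosion
namespace Corrosion

lemma z_abs_le (u : Sp) : |z u| ≤ 3 := by
  cases u <;> simp [z] <;> norm_num

lemma young_ineq (a b c : ℝ) (hc : 0 < c) : a * b ≤ c / 2 * a ^ 2 + b ^ 2 / (2 * c) := by
  apply le_of_mul_le_mul_right _ (by positivity : (0:ℝ) < 2 * c)
  have hb : b ^ 2 / (2 * c) * (2 * c) = b ^ 2 := div_mul_cancel₀ _ (by positivity)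
  nlinarith [sq_nonneg (c * a - b)]

lemma edge_estimate (d : Data) (m : Mesh) (u : Sp) (w Pk : ℕ → ℝ) (M U : ℝ)
    (hM : 0 < M) (hU : 0 < U)
    (hdpsi : ∀ i, i ≤ m.I → |dPsiF m Pk i| ≤ M)
    (hw : ∀ i, i ≤ m.I + 1 → 0 ≤ w i ∧ w i ≤ U)
    {i : ℕ} (hi : i ≤ m.I) :
    Real.exp (-(3 * M)) / 2 * (w (i + 1) - w i) ^ 2 / m.hp i ≤
      Flux m d u Pk w i * (w i - w (i + 1)) +
        9 * M ^ 2 * U ^ 2 / (2 * Real.exp (-(3 * M))) * m.hp i := by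
  set c0 : ℝ := Real.exp (-(3 * M)) with hc0def
  have hc0 : 0 < c0 := Real.exp_pos _
  have hppos := m.hp_pos hi
  have hple := m.hp_le_one hi
  have hz := z_abs_le u
  set ψ : ℝ := dPsiF m Pk i with hψ
  set y : ℝ := z u * m.hp i * ψ with hy
  have hψb : |ψ| ≤ M := hdpsi i hi
  have hyb : |y| ≤ 3 * M * m.hp i := by
    rw [hy, abs_mul, abs_mul, abs_of_pos hppos]
    calc |z u| * m.hp i * |ψ| ≤ 3 * m.hp i * M := by
          apply mul_le_mul (mul_le_mul_of_nonneg_right hz hppos.le) hψb (abs_nonneg _)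
            (by positivity)
      _ = 3 * M * m.hp i := by ring
  have hyb2 : |y| ≤ 3 * M := le_trans hyb (by nlinarith)
  have hBge : c0 ≤ Bern y :=
    le_trans (Real.exp_le_exp.mpr (by simpa using hyb2)) (Bern_ge_exp y)
  have harg : -(z u) * m.hp i * dPsiF m Pk i = -y := by rw [hy, hψ]; ring
  have hflux : Flux m d u Pk w i * m.hp i = Bern y * w i - Bern (-y) * w (i + 1) := by
    unfold Flux
    rw [harg, div_mul_cancel₀ _ hppos.ne']
  rw [div_le_iff₀ hppos]
  have expand : (Flux m d u Pk w i * (w i - w (i + 1)) +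
      9 * M ^ 2 * U ^ 2 / (2 * c0) * m.hp i) * m.hp i =
      (Flux m d u Pk w i * m.hp i) * (w i - w (i + 1)) +
      9 * M ^ 2 * U ^ 2 / (2 * c0) * m.hp i ^ 2 := by ring
  rw [expand, hflux, Bern_neg]
  have hwi := hw i (by omega)
  have hwi1 := hw (i + 1) (by omega)
  set δ : ℝ := w i - w (i + 1) with hδ
  have h5 : y * w (i + 1) * δ ≤ 3 * M * U * (m.hp i * |δ|) := by
    calc y * w (i + 1) * δ ≤ |y * w (i + 1) * δ| := le_abs_self _
      _ = |y| * w (i + 1) * |δ| := by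
          rw [abs_mul, abs_mul, abs_of_nonneg hwi1.1]
      _ ≤ (3 * M * m.hp i) * U * |δ| := by
          apply mul_le_mul_of_nonneg_right _ (abs_nonneg _)
          exact mul_le_mul hyb hwi1.2 hwi1.1 (by positivity)
      _ = 3 * M * U * (m.hp i * |δ|) := by ring
  have hC1 : 9 * M ^ 2 * U ^ 2 / (2 * c0) * (2 * c0) = 9 * M ^ 2 * U ^ 2 :=
    div_mul_cancel₀ _ (by positivity)
  have h6 : 3 * M * U * (m.hp i * |δ|) ≤
      c0 / 2 * δ ^ 2 + 9 * M ^ 2 * U ^ 2 / (2 * c0) * m.hp i ^ 2 := by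
    calc 3 * M * U * (m.hp i * |δ|) = |δ| * (3 * M * U * m.hp i) := by ring
      _ ≤ c0 / 2 * |δ| ^ 2 + (3 * M * U * m.hp i) ^ 2 / (2 * c0) :=
          young_ineq _ _ _ hc0
      _ = c0 / 2 * δ ^ 2 + 9 * M ^ 2 * U ^ 2 / (2 * c0) * m.hp i ^ 2 := by
          rw [sq_abs]; ring
  have h7 : c0 * δ ^ 2 ≤ Bern y * δ ^ 2 :=
    mul_le_mul_of_nonneg_right hBge (sq_nonneg δ)
  have hsq : (w (i + 1) - w i) ^ 2 = δ ^ 2 := by rw [hδ]; ring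
  rw [hsq]
  have hexp2 : (Bern y * w i - (Bern y + y) * w (i + 1)) * δ =
      Bern y * δ ^ 2 - y * w (i + 1) * δ := by rw [hδ]; ring
  clear_value ψ y δ c0
  rw [hexp2]
  linarith [h5, h6, h7]

end Corrosion
namespace Corrosion

lemma step_estimate (d : Data) (m : Mesh) (u : Sp) (w wold Pk : ℕ → ℝ)
    (M U eps Δt G0 G1 : ℝ) (hM : 0 < M) (hU : 0 < U) (heps : 0 ≤ eps) (hΔt : 0 < Δt)
    (hdpsi : ∀ i, i ≤ m.I → |dPsiF m Pk i| ≤ M)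
    (hw : ∀ i, i ≤ m.I + 1 → 0 ≤ w i ∧ w i ≤ U)
    (hint : ∀ i, 1 ≤ i → i ≤ m.I →
      eps * m.h i * (w i - wold i) / Δt + Flux m d u Pk w i - Flux m d u Pk w (i - 1) = 0)
    (hb0 : Flux m d u Pk w 0 * w 0 ≤ G0)
    (hb1 : -(Flux m d u Pk w m.I * w (m.I + 1)) ≤ G1) :
    Δt * m.norm1sq w ≤
      Δt * ((2 / Real.exp (-(3 * M))) *
          (9 * M ^ 2 * U ^ 2 / (2 * Real.exp (-(3 * M))) + G0 + G1) + 2 * U ^ 2) +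
      (eps / Real.exp (-(3 * M))) *
        ((∑ j ∈ Finset.range m.I, m.h (j + 1) * wold (j + 1) ^ 2) -
         (∑ j ∈ Finset.range m.I, m.h (j + 1) * w (j + 1) ^ 2)) := by
  set c0 : ℝ := Real.exp (-(3 * M)) with hc0def
  have hc0 : 0 < c0 := Real.exp_pos _
  set C1 : ℝ := 9 * M ^ 2 * U ^ 2 / (2 * c0) with hC1def
  set F : ℕ → ℝ := fun i => Flux m d u Pk w i with hF
  set S : ℝ := ∑ i ∈ Finset.range (m.I + 1), (w (i + 1) - w i) ^ 2 / m.hp i with hSdef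
  set ΔS : ℝ := (∑ j ∈ Finset.range m.I, m.h (j + 1) * wold (j + 1) ^ 2) -
      (∑ j ∈ Finset.range m.I, m.h (j + 1) * w (j + 1) ^ 2) with hΔSdef
  -- Step 1: sum the edge estimates
  have h1 : c0 / 2 * S ≤ (∑ i ∈ Finset.range (m.I + 1), F i * (w i - w (i + 1))) + C1 := by
    have h1a : ∑ i ∈ Finset.range (m.I + 1), (c0 / 2 * (w (i + 1) - w i) ^ 2 / m.hp i) ≤
        ∑ i ∈ Finset.range (m.I + 1), (F i * (w i - w (i + 1)) + C1 * m.hp i) := by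
      refine Finset.sum_le_sum fun i hi => ?_
      exact edge_estimate d m u w Pk M U hM hU hdpsi hw
        (Nat.lt_succ_iff.mp (Finset.mem_range.mp hi))
    rw [Finset.sum_add_distrib, ← Finset.mul_sum, m.sum_hp, mul_one] at h1a
    calc c0 / 2 * S = ∑ i ∈ Finset.range (m.I + 1),
          (c0 / 2 * (w (i + 1) - w i) ^ 2 / m.hp i) := by
          rw [hSdef, Finset.mul_sum]
          exact Finset.sum_congr rfl fun i _ => by ring
      _ ≤ _ := h1a
  -- Step 2: Abel summation
  have habel : ∑ i ∈ Finset.range (m.I + 1), F i * (w i - w (i + 1)) =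
      F 0 * w 0 - F m.I * w (m.I + 1) +
        ∑ j ∈ Finset.range m.I, (F (j + 1) - F j) * w (j + 1) := by
    have e1 : ∑ i ∈ Finset.range (m.I + 1), F i * (w i - w (i + 1)) =
        (∑ i ∈ Finset.range (m.I + 1), F i * w i) -
        (∑ i ∈ Finset.range (m.I + 1), F i * w (i + 1)) := by
      rw [← Finset.sum_sub_distrib]
      exact Finset.sum_congr rfl fun i _ => by ring
    have e2 : ∑ i ∈ Finset.range (m.I + 1), F i * w i =
        (∑ j ∈ Finset.range m.I, F (j + 1) * w (j + 1)) + F 0 * w 0 :=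
      Finset.sum_range_succ' (fun i => F i * w i) m.I
    have e3 : ∑ i ∈ Finset.range (m.I + 1), F i * w (i + 1) =
        (∑ j ∈ Finset.range m.I, F j * w (j + 1)) + F m.I * w (m.I + 1) :=
      Finset.sum_range_succ (fun i => F i * w (i + 1)) m.I
    have e4 : ∑ j ∈ Finset.range m.I, (F (j + 1) - F j) * w (j + 1) =
        (∑ j ∈ Finset.range m.I, F (j + 1) * w (j + 1)) -
        (∑ j ∈ Finset.range m.I, F j * w (j + 1)) := by
      rw [← Finset.sum_sub_distrib]
      exact Finset.sum_congr rfl fun j _ => by ring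
    rw [e1, e2, e3, e4]; ring
  -- Step 3: interior equations
  have hsub : ∀ j ∈ Finset.range m.I, (F (j + 1) - F j) * w (j + 1) =
      -(eps * m.h (j + 1) * (w (j + 1) - wold (j + 1)) / Δt) * w (j + 1) := by
    intro j hj
    have hj' := Finset.mem_range.mp hj
    have := hint (j + 1) (by omega) (by omega)
    simp only [Nat.add_sub_cancel] at this
    have hFe : F (j + 1) - F j = -(eps * m.h (j + 1) * (w (j + 1) - wold (j + 1)) / Δt) := by
      rw [hF]; simp only []; linarith [this]
    rw [hFe]
  -- Step 4: time term
  have htime : ∑ j ∈ Finset.range m.I,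
      -(eps * m.h (j + 1) * (w (j + 1) - wold (j + 1)) / Δt) * w (j + 1) ≤
      eps / (2 * Δt) * ΔS := by
    have pt : ∀ j ∈ Finset.range m.I,
        -(eps * m.h (j + 1) * (w (j + 1) - wold (j + 1)) / Δt) * w (j + 1) ≤
        eps / (2 * Δt) * (m.h (j + 1) * wold (j + 1) ^ 2 - m.h (j + 1) * w (j + 1) ^ 2) := by
      intro j hj
      have hj' := Finset.mem_range.mp hj
      have hh := m.h_pos (i := j + 1) (by omega) (by omega)
      set a := w (j + 1); set b := wold (j + 1); set hh1 := m.h (j + 1)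
      have hc : 0 ≤ eps * hh1 / Δt := by positivity
      have h2Δ : (0:ℝ) < 2 * Δt := by positivity
      refine le_of_mul_le_mul_right ?_ h2Δ
      have hXe : -(eps * hh1 * (a - b) / Δt) * a * (2 * Δt) =
          -(2 * (eps * hh1 * ((a - b) * a))) := by
        field_simp <;> ring
      have hYe : eps / (2 * Δt) * (hh1 * b ^ 2 - hh1 * a ^ 2) * (2 * Δt) =
          eps * (hh1 * b ^ 2 - hh1 * a ^ 2) := by
        field_simp <;> ring
      rw [hXe, hYe]
      nlinarith [mul_nonneg (mul_nonneg heps hh.le) (sq_nonneg (a - b))]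
    calc _ ≤ ∑ j ∈ Finset.range m.I,
          eps / (2 * Δt) * (m.h (j + 1) * wold (j + 1) ^ 2 - m.h (j + 1) * w (j + 1) ^ 2) :=
          Finset.sum_le_sum pt
      _ = eps / (2 * Δt) * ΔS := by
          rw [← Finset.mul_sum, hΔSdef, Finset.sum_sub_distrib]
  -- combine
  have h2 : c0 / 2 * S ≤ G0 + G1 + eps / (2 * Δt) * ΔS + C1 := by
    rw [habel] at h1
    rw [Finset.sum_congr rfl hsub] at h1
    have := htime
    have hb1' : -(F m.I * w (m.I + 1)) ≤ G1 := hb1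
    linarith [hb0, hb1', htime, h1]
  have hnorm : m.norm1sq w = S + w 0 ^ 2 + w (m.I + 1) ^ 2 := rfl
  have hw0 : w 0 ^ 2 ≤ U ^ 2 := by
    have := hw 0 (by omega)
    nlinarith [this.1, this.2]
  have hwI : w (m.I + 1) ^ 2 ≤ U ^ 2 := by
    have := hw (m.I + 1) (by omega)
    nlinarith [this.1, this.2]
  have hS2 : S ≤ 2 / c0 * (G0 + G1 + eps / (2 * Δt) * ΔS + C1) := by
    have hid : S = 2 / c0 * (c0 / 2 * S) := by field_simp <;> ring
    rw [hid]
    exact mul_le_mul_of_nonneg_left h2 (by positivity)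
  have hfinal : Δt * (2 / c0 * (G0 + G1 + eps / (2 * Δt) * ΔS + C1) + 2 * U ^ 2) =
      Δt * (2 / c0 * (C1 + G0 + G1) + 2 * U ^ 2) + eps / c0 * ΔS := by
    field_simp
    ring
  calc Δt * m.norm1sq w = Δt * (S + w 0 ^ 2 + w (m.I + 1) ^ 2) := by rw [hnorm]
    _ ≤ Δt * (2 / c0 * (G0 + G1 + eps / (2 * Δt) * ΔS + C1) + 2 * U ^ 2) := by
        apply mul_le_mul_of_nonneg_left _ hΔt.le
        linarith [hS2, hw0, hwI]
    _ = Δt * (2 / c0 * (C1 + G0 + G1) + 2 * U ^ 2) + eps / c0 * ΔS := hfinal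

end Corrosion
set_option maxHeartbeats 2000000 in
open Corrosion in
/-- discrete `L²(0,T;H¹)` estimate on the densities. -/
theorem discrete_L2H1_estimate_densities
    (d : Data) (heps : 0 ≤ d.eps) (ha0 : 0 < d.alpha0) (ha1 : 0 < d.alpha1) (hH : d.HypH)
    (T : ℝ) (hT : 0 < T) :
    ∃ C : ℝ, 0 < C ∧ ∀ (K : ℕ), 1 ≤ K → ∀ (m : Mesh)
      (sol : Sp → ℕ → ℕ → ℝ) (Psi : ℕ → ℕ → ℝ),
      Scheme m d T K sol Psi → Stable m d K sol →
      ∀ u : Sp, (∑ k ∈ Finset.range K, T / K * m.norm1sq (sol u (k + 1))) ≤ C := by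
  obtain ⟨R, hRdef⟩ : ∃ x : ℝ, x = 3 * d.umax Sp.P + d.umax Sp.N + |d.rho| := ⟨_, rfl⟩
  have hR0 : 0 < R := by
    have := d.umax_pos Sp.P; have := d.umax_pos Sp.N; have := abs_nonneg d.rho
    rw [hRdef]; linarith
  obtain ⟨A, hAdef⟩ : ∃ x : ℝ, x = R / d.lam ^ 2 := ⟨_, rfl⟩
  have hA : 0 < A := hAdef ▸ div_pos hR0 (pow_pos d.lam_pos 2)
  obtain ⟨D0, hD0def⟩ : ∃ x : ℝ, x = (|d.V| + |d.dPsi0| + |d.dPsi1| + A + d.alpha1 * A) /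
      (1 + d.alpha0 + d.alpha1) := ⟨_, rfl⟩
  have hD0 : 0 ≤ D0 := by
    rw [hD0def]
    apply div_nonneg _ (by linarith)
    have := abs_nonneg d.V; have := abs_nonneg d.dPsi0; have := abs_nonneg d.dPsi1
    have := mul_nonneg ha1.le hA.le
    linarith
  obtain ⟨M, hMdef⟩ : ∃ x : ℝ, x = D0 + A := ⟨_, rfl⟩
  have hM : 0 < M := by rw [hMdef]; linarith
  obtain ⟨S0, hS0def⟩ : ∃ x : ℝ, x = |d.dPsi0| + d.alpha0 * D0 := ⟨_, rfl⟩
  have hS0 : 0 ≤ S0 := by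
    rw [hS0def]; have := abs_nonneg d.dPsi0; have := mul_nonneg ha0.le hD0; linarith
  obtain ⟨S1, hS1def⟩ : ∃ x : ℝ, x = |d.V| + |d.dPsi1| + d.alpha1 * M := ⟨_, rfl⟩
  have hS1 : 0 ≤ S1 := by
    rw [hS1def]
    have := abs_nonneg d.V; have := abs_nonneg d.dPsi1
    have := mul_nonneg ha1.le hM.le; linarith
  obtain ⟨U, hUdef⟩ : ∃ x : ℝ, x = max (d.umax Sp.P) (d.umax Sp.N) := ⟨_, rfl⟩
  have hU : 0 < U := hUdef ▸ lt_of_lt_of_le (d.umax_pos Sp.P) (le_max_left _ _)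
  obtain ⟨c0, hc0def⟩ : ∃ x : ℝ, x = Real.exp (-(3 * M)) := ⟨_, rfl⟩
  have hc0 : 0 < c0 := hc0def ▸ Real.exp_pos _
  obtain ⟨CO, hCOdef⟩ : ∃ x : ℝ, x = d.m0 Sp.P + d.m0 Sp.N + d.k1 Sp.P + d.k1 Sp.N := ⟨_, rfl⟩
  have hCO : 0 < CO := by
    have := d.m0_pos Sp.P; have := d.m0_pos Sp.N
    have := d.k1_pos Sp.P; have := d.k1_pos Sp.N
    rw [hCOdef]; linarith
  obtain ⟨EXPE, hEXPEdef⟩ : ∃ x : ℝ, x = Real.exp (3 * (S0 + |d.V| + S1)) := ⟨_, rfl⟩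
  have hEXPE : 0 < EXPE := hEXPEdef ▸ Real.exp_pos _
  obtain ⟨G, hGdef⟩ : ∃ x : ℝ, x = CO * U * EXPE * U := ⟨_, rfl⟩
  have hG : 0 < G := hGdef ▸ mul_pos (mul_pos (mul_pos hCO hU) hEXPE) hU
  obtain ⟨E, hEdef⟩ : ∃ x : ℝ, x = 1 + d.eps := ⟨_, rfl⟩
  have hE : 0 < E := by rw [hEdef]; linarith
  obtain ⟨B, hBdef⟩ : ∃ x : ℝ,
      x = 2 / c0 * (9 * M ^ 2 * U ^ 2 / (2 * c0) + G + G) + 2 * U ^ 2 := ⟨_, rfl⟩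
  have hB : 0 ≤ B := by
    rw [hBdef]
    have h1 : 0 ≤ 9 * M ^ 2 * U ^ 2 / (2 * c0) := by
      apply div_nonneg (by positivity) (by linarith)
    have h2 : 0 ≤ 2 / c0 := div_nonneg (by norm_num) hc0.le
    have h3 : 0 ≤ 2 / c0 * (9 * M ^ 2 * U ^ 2 / (2 * c0) + G + G) :=
      mul_nonneg h2 (by linarith)
    have h4 : (0:ℝ) ≤ 2 * U ^ 2 := by positivity
    linarith
  have hCpos : 0 < T * B + E / c0 * U ^ 2 + 1 := by
    have h1 : 0 ≤ T * B := mul_nonneg hT.le hB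
    have h2 : 0 ≤ E / c0 * U ^ 2 := mul_nonneg (div_nonneg hE.le hc0.le) (sq_nonneg _)
    linarith
  refine ⟨T * B + E / c0 * U ^ 2 + 1, hCpos, ?_⟩
  intro K hK m sol Psi hSch hStab u
  obtain ⟨hinit, hpois, hcons, hbcA, hbcB, hfb0, hfb1⟩ := hSch
  have hK0 : (0:ℝ) < (K:ℝ) := by exact_mod_cast Nat.pos_of_ne_zero (by omega)
  have hΔt : 0 < T / K := div_pos hT hK0
  have humax : d.umax u ≤ U := by
    rw [hUdef]
    cases u
    · exact le_max_left _ _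
    · exact le_max_right _ _
  have hepsu : 0 ≤ d.epsu u := by
    cases u
    · norm_num [Data.epsu]
    · simpa [Data.epsu] using heps
  have hepsuE : d.epsu u ≤ E := by
    cases u <;> (rw [hEdef]; simp [Data.epsu]) <;> linarith
  have hz := z_abs_le u
  -- per-step estimate
  have hstep : ∀ k, k < K → T / K * m.norm1sq (sol u (k + 1)) ≤
      T / K * B + d.epsu u / c0 *
        ((∑ j ∈ Finset.range m.I, m.h (j + 1) * sol u k (j + 1) ^ 2) -
         (∑ j ∈ Finset.range m.I, m.h (j + 1) * sol u (k + 1) (j + 1) ^ 2)) := by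
    intro k hk
    -- Poisson step bound
    have hpois' : ∀ i, 1 ≤ i → i ≤ m.I →
        |dPsiF m (Psi (k + 1)) i - dPsiF m (Psi (k + 1)) (i - 1)| ≤
          m.h i * (R / d.lam ^ 2) := by
      intro i h1 h2
      have heq := hpois k hk i h1 h2
      have hl2 : (0:ℝ) < d.lam ^ 2 := pow_pos d.lam_pos 2
      have hhp := m.h_pos h1 h2
      have hρ : |3 * sol Sp.P (k + 1) i - sol Sp.N (k + 1) i + d.rho| ≤ R := by
        have hP := hStab Sp.P (k + 1) (by omega) i (by omega)
        have hN := hStab Sp.N (k + 1) (by omega) i (by omega)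
        have h1r := le_abs_self d.rho; have h2r := neg_abs_le d.rho
        rw [abs_le, hRdef]
        constructor <;> linarith [hP.1, hP.2, hN.1, hN.2]
      have hX : dPsiF m (Psi (k + 1)) i - dPsiF m (Psi (k + 1)) (i - 1) =
          -(m.h i * (3 * sol Sp.P (k + 1) i - sol Sp.N (k + 1) i + d.rho)) / d.lam ^ 2 := by
        rw [eq_div_iff hl2.ne']
        linarith [heq]
      rw [hX, abs_div, abs_neg, abs_mul, abs_of_pos hhp, abs_of_pos hl2, mul_div_assoc]
      exact mul_le_mul_of_nonneg_left ((div_le_div_iff_of_pos_right hl2).mpr hρ) hhp.le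
    obtain ⟨hMall, hP0, hPI⟩ := psi_bound d.lam d.alpha0 d.alpha1 d.V d.dPsi0 d.dPsi1 R
      ha0 ha1 (div_nonneg hR0.le (sq_nonneg _)) m (Psi (k + 1)) hpois'
      (hbcA k hk) (hbcB k hk)
    have hdpsi : ∀ i, i ≤ m.I → |dPsiF m (Psi (k + 1)) i| ≤ M := by
      intro i hi
      rw [hMdef, hD0def, hAdef]
      exact hMall i hi
    have hP0' : |Psi (k + 1) 0| ≤ S0 := by
      rw [hS0def, hD0def, hAdef]; exact hP0
    have hPI' : |Psi (k + 1) (m.I + 1)| ≤ S1 := by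
      rw [hS1def, hMdef, hD0def, hAdef]; exact hPI
    have hw : ∀ i, i ≤ m.I + 1 → 0 ≤ sol u (k + 1) i ∧ sol u (k + 1) i ≤ U := by
      intro i hi
      have := hStab u (k + 1) (by omega) i hi
      exact ⟨this.1, this.2.trans humax⟩
    -- boundary term at x = 0
    have hb0 : Flux m d u (Psi (k + 1)) (sol u (k + 1)) 0 * sol u (k + 1) 0 ≤ G := by
      have hfb := hfb0 u k hk
      have hw0 := hw 0 (by omega)
      have hbeta : 0 ≤ d.beta0 u (Psi (k + 1) 0) := by
        unfold Data.beta0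
        exact add_nonneg (mul_nonneg (d.m0_pos u).le (Real.exp_nonneg _))
          (mul_nonneg (d.k0_pos u).le (Real.exp_nonneg _))
      have hgam : 0 ≤ d.gamma0 u (Psi (k + 1) 0) := by
        unfold Data.gamma0
        exact mul_nonneg (mul_nonneg (d.m0_pos u).le (d.umax_pos u).le) (Real.exp_nonneg _)
      have hF0 : Flux m d u (Psi (k + 1)) (sol u (k + 1)) 0 =
          d.gamma0 u (Psi (k + 1) 0) - d.beta0 u (Psi (k + 1) 0) * sol u (k + 1) 0 := by
        linarith [hfb]
      have hgb : d.gamma0 u (Psi (k + 1) 0) ≤ d.m0 u * d.umax u * EXPE := by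
        unfold Data.gamma0
        apply mul_le_mul_of_nonneg_left _ (mul_nonneg (d.m0_pos u).le (d.umax_pos u).le)
        rw [hEXPEdef]
        apply Real.exp_le_exp.mpr
        have hb0m := d.b0_mem u
        have habs : -(z u) * d.b0 u * Psi (k + 1) 0 ≤ |(-(z u)) * d.b0 u * Psi (k + 1) 0| :=
          le_abs_self _
        have heq2 : |(-(z u)) * d.b0 u * Psi (k + 1) 0| = |z u| * (d.b0 u * |Psi (k + 1) 0|) := by
          rw [abs_mul, abs_mul, abs_neg, abs_of_nonneg hb0m.1, mul_assoc]
        have ht : |z u| * (d.b0 u * |Psi (k + 1) 0|) ≤ 3 * (1 * S0) :=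
          mul_le_mul hz (mul_le_mul hb0m.2 hP0' (abs_nonneg _) zero_le_one)
            (mul_nonneg hb0m.1 (abs_nonneg _)) (by norm_num)
        have := abs_nonneg d.V
        linarith
      have hm0le : d.m0 u ≤ CO := by
        have := d.m0_pos Sp.P; have := d.m0_pos Sp.N
        have := d.k1_pos Sp.P; have := d.k1_pos Sp.N
        cases u <;> (rw [hCOdef]; linarith)
      have hcore : d.m0 u * d.umax u ≤ CO * U :=
        mul_le_mul hm0le humax (d.umax_pos u).le hCO.le
      calc Flux m d u (Psi (k + 1)) (sol u (k + 1)) 0 * sol u (k + 1) 0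
          = (d.gamma0 u (Psi (k + 1) 0) - d.beta0 u (Psi (k + 1) 0) * sol u (k + 1) 0) *
              sol u (k + 1) 0 := by rw [hF0]
        _ ≤ d.gamma0 u (Psi (k + 1) 0) * sol u (k + 1) 0 := by
            have hid : (d.gamma0 u (Psi (k + 1) 0) -
                d.beta0 u (Psi (k + 1) 0) * sol u (k + 1) 0) * sol u (k + 1) 0 =
                d.gamma0 u (Psi (k + 1) 0) * sol u (k + 1) 0 -
                d.beta0 u (Psi (k + 1) 0) * (sol u (k + 1) 0 * sol u (k + 1) 0) := by ring
            rw [hid]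
            linarith [mul_nonneg hbeta (mul_nonneg hw0.1 hw0.1)]
        _ ≤ (d.m0 u * d.umax u * EXPE) * U :=
            mul_le_mul hgb hw0.2 hw0.1
              (mul_nonneg (mul_nonneg (d.m0_pos u).le (d.umax_pos u).le) hEXPE.le)
        _ ≤ (CO * U * EXPE) * U := by
            apply mul_le_mul_of_nonneg_right _ hU.le
            exact mul_le_mul_of_nonneg_right hcore hEXPE.le
        _ = G := hGdef.symm
    -- boundary term at x = 1
    have hb1 : -(Flux m d u (Psi (k + 1)) (sol u (k + 1)) m.I * sol u (k + 1) (m.I + 1)) ≤ G := by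
      have hfb := hfb1 u k hk
      have hw1 := hw (m.I + 1) (by omega)
      have hbeta : 0 ≤ d.beta1 u (d.V - Psi (k + 1) (m.I + 1)) := by
        unfold Data.beta1
        exact add_nonneg (mul_nonneg (d.m1_pos u).le (Real.exp_nonneg _))
          (mul_nonneg (d.k1_pos u).le (Real.exp_nonneg _))
      have hgam : 0 ≤ d.gamma1 u (d.V - Psi (k + 1) (m.I + 1)) := by
        unfold Data.gamma1
        exact mul_nonneg (mul_nonneg (d.k1_pos u).le (d.umax_pos u).le) (Real.exp_nonneg _)
      have hxb : |d.V - Psi (k + 1) (m.I + 1)| ≤ |d.V| + S1 := by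
        calc |d.V - Psi (k + 1) (m.I + 1)| ≤ |d.V| + |Psi (k + 1) (m.I + 1)| := abs_sub _ _
          _ ≤ |d.V| + S1 := by linarith [hPI']
      have hgb : d.gamma1 u (d.V - Psi (k + 1) (m.I + 1)) ≤ d.k1 u * d.umax u * EXPE := by
        unfold Data.gamma1
        apply mul_le_mul_of_nonneg_left _ (mul_nonneg (d.k1_pos u).le (d.umax_pos u).le)
        rw [hEXPEdef]
        apply Real.exp_le_exp.mpr
        have ha1m := d.a1_mem u
        have habs : z u * d.a1 u * (d.V - Psi (k + 1) (m.I + 1)) ≤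
            |z u * d.a1 u * (d.V - Psi (k + 1) (m.I + 1))| := le_abs_self _
        have heq2 : |z u * d.a1 u * (d.V - Psi (k + 1) (m.I + 1))| =
            |z u| * (d.a1 u * |d.V - Psi (k + 1) (m.I + 1)|) := by
          rw [abs_mul, abs_mul, abs_of_nonneg ha1m.1, mul_assoc]
        have ht : |z u| * (d.a1 u * |d.V - Psi (k + 1) (m.I + 1)|) ≤ 3 * (1 * (|d.V| + S1)) :=
          mul_le_mul hz (mul_le_mul ha1m.2 hxb (abs_nonneg _) zero_le_one)
            (mul_nonneg ha1m.1 (abs_nonneg _)) (by norm_num)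
        linarith
      have hk1le : d.k1 u ≤ CO := by
        have := d.m0_pos Sp.P; have := d.m0_pos Sp.N
        have := d.k1_pos Sp.P; have := d.k1_pos Sp.N
        cases u <;> (rw [hCOdef]; linarith)
      have hcore : d.k1 u * d.umax u ≤ CO * U :=
        mul_le_mul hk1le humax (d.umax_pos u).le hCO.le
      calc -(Flux m d u (Psi (k + 1)) (sol u (k + 1)) m.I * sol u (k + 1) (m.I + 1))
          = (d.gamma1 u (d.V - Psi (k + 1) (m.I + 1)) -
              d.beta1 u (d.V - Psi (k + 1) (m.I + 1)) * sol u (k + 1) (m.I + 1)) *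
              sol u (k + 1) (m.I + 1) := by rw [hfb]; ring
        _ ≤ d.gamma1 u (d.V - Psi (k + 1) (m.I + 1)) * sol u (k + 1) (m.I + 1) := by
            have hid : (d.gamma1 u (d.V - Psi (k + 1) (m.I + 1)) -
                d.beta1 u (d.V - Psi (k + 1) (m.I + 1)) * sol u (k + 1) (m.I + 1)) *
                sol u (k + 1) (m.I + 1) =
                d.gamma1 u (d.V - Psi (k + 1) (m.I + 1)) * sol u (k + 1) (m.I + 1) -
                d.beta1 u (d.V - Psi (k + 1) (m.I + 1)) *
                  (sol u (k + 1) (m.I + 1) * sol u (k + 1) (m.I + 1)) := by ring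
            rw [hid]
            linarith [mul_nonneg hbeta (mul_nonneg hw1.1 hw1.1)]
        _ ≤ (d.k1 u * d.umax u * EXPE) * U :=
            mul_le_mul hgb hw1.2 hw1.1
              (mul_nonneg (mul_nonneg (d.k1_pos u).le (d.umax_pos u).le) hEXPE.le)
        _ ≤ (CO * U * EXPE) * U := by
            apply mul_le_mul_of_nonneg_right _ hU.le
            exact mul_le_mul_of_nonneg_right hcore hEXPE.le
        _ = G := hGdef.symm
    have hse := step_estimate d m u (sol u (k + 1)) (sol u k) (Psi (k + 1)) M U
      (d.epsu u) (T / K) G G hM hU hepsu hΔt hdpsi hw (hcons u k hk) hb0 hb1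
    rw [← hc0def] at hse
    rw [← hBdef] at hse
    exact hse
  -- sum over time steps
  have hsum : ∑ k ∈ Finset.range K, T / K * m.norm1sq (sol u (k + 1)) ≤
      (K : ℝ) * (T / K * B) + d.epsu u / c0 *
        ((∑ j ∈ Finset.range m.I, m.h (j + 1) * sol u 0 (j + 1) ^ 2) -
         (∑ j ∈ Finset.range m.I, m.h (j + 1) * sol u K (j + 1) ^ 2)) := by
    calc ∑ k ∈ Finset.range K, T / K * m.norm1sq (sol u (k + 1))
        ≤ ∑ k ∈ Finset.range K, (T / K * B + d.epsu u / c0 *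
            ((∑ j ∈ Finset.range m.I, m.h (j + 1) * sol u k (j + 1) ^ 2) -
             (∑ j ∈ Finset.range m.I, m.h (j + 1) * sol u (k + 1) (j + 1) ^ 2))) :=
          Finset.sum_le_sum fun k hk => hstep k (Finset.mem_range.mp hk)
      _ = (K : ℝ) * (T / K * B) + d.epsu u / c0 *
            ((∑ j ∈ Finset.range m.I, m.h (j + 1) * sol u 0 (j + 1) ^ 2) -
             (∑ j ∈ Finset.range m.I, m.h (j + 1) * sol u K (j + 1) ^ 2)) := by
          rw [Finset.sum_add_distrib, Finset.sum_const, ← Finset.mul_sum,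
            Finset.sum_range_sub'
              (fun k => ∑ j ∈ Finset.range m.I, m.h (j + 1) * sol u k (j + 1) ^ 2) K,
            Finset.card_range, nsmul_eq_mul]
  have hKT : (K : ℝ) * (T / K * B) = T * B := by
    field_simp
  have hSf0 : (∑ j ∈ Finset.range m.I, m.h (j + 1) * sol u 0 (j + 1) ^ 2) ≤ U ^ 2 := by
    calc ∑ j ∈ Finset.range m.I, m.h (j + 1) * sol u 0 (j + 1) ^ 2
        ≤ ∑ j ∈ Finset.range m.I, m.h (j + 1) * U ^ 2 := by
          refine Finset.sum_le_sum fun j hj => ?_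
          have hj' := Finset.mem_range.mp hj
          have hst := hStab u 0 (by omega) (j + 1) (by omega)
          have hhp := m.h_pos (i := j + 1) (by omega) (by omega)
          have hsq : sol u 0 (j + 1) ^ 2 ≤ U ^ 2 :=
            pow_le_pow_left₀ hst.1 (hst.2.trans humax) 2
          exact mul_le_mul_of_nonneg_left hsq hhp.le
      _ = U ^ 2 := by rw [← Finset.sum_mul, m.sum_h', one_mul]
  have hSfK : 0 ≤ ∑ j ∈ Finset.range m.I, m.h (j + 1) * sol u K (j + 1) ^ 2 := by
    refine Finset.sum_nonneg fun j hj => ?_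
    have hj' := Finset.mem_range.mp hj
    exact mul_nonneg (m.h_pos (i := j + 1) (by omega) (by omega)).le (sq_nonneg _)
  have htail : d.epsu u / c0 *
      ((∑ j ∈ Finset.range m.I, m.h (j + 1) * sol u 0 (j + 1) ^ 2) -
       (∑ j ∈ Finset.range m.I, m.h (j + 1) * sol u K (j + 1) ^ 2)) ≤ E / c0 * U ^ 2 := by
    have h1 : d.epsu u / c0 *
        ((∑ j ∈ Finset.range m.I, m.h (j + 1) * sol u 0 (j + 1) ^ 2) -
         (∑ j ∈ Finset.range m.I, m.h (j + 1) * sol u K (j + 1) ^ 2)) ≤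
        d.epsu u / c0 * U ^ 2 := by
      apply mul_le_mul_of_nonneg_left _ (div_nonneg hepsu hc0.le)
      linarith
    have h2 : d.epsu u / c0 ≤ E / c0 := (div_le_div_iff_of_pos_right hc0).mpr hepsuE
    calc _ ≤ d.epsu u / c0 * U ^ 2 := h1
      _ ≤ E / c0 * U ^ 2 := mul_le_mul_of_nonneg_right h2 (sq_nonneg _)
  calc ∑ k ∈ Finset.range K, T / K * m.norm1sq (sol u (k + 1))
      ≤ (K : ℝ) * (T / K * B) + d.epsu u / c0 *
          ((∑ j ∈ Finset.range m.I, m.h (j + 1) * sol u 0 (j + 1) ^ 2) -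
           (∑ j ∈ Finset.range m.I, m.h (j + 1) * sol u K (j + 1) ^ 2)) := hsum
    _ ≤ T * B + E / c0 * U ^ 2 := by rw [hKT]; linarith [htail]
    _ ≤ T * B + E / c0 * U ^ 2 + 1 := by linarith
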